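/- The family of stacked paths has unbounded lettericity: for every positive integer k there exists a positive integer n such that the stacked path R_n has no k-lettering. -/

import Mathlib

/-- A `k`-lettering of a graph `G`: a decoder `D ⊆ Fin k × Fin k`, a letter
assignment `L`, and an injective ordering `ord` such that for `ord u < ord v`,
`u` and `v` are adjacent iff `(L u, L v) ∈ D`. -/
def HasLettering {V : Type*} (G : SimpleGraph V) (k : ℕ) : Prop :=
  ∃ (D : Set (Fin k × Fin k)) (L : V → Fin k) (ord : V → ℕ),
    Function.Injective ord ∧
    ∀ u v : V, u ≠ v → ord u < ord v → (G.Adj u v ↔ (L u, L v) ∈ D)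

/-- The lettericity of a graph: the least `k` such that it has a `k`-lettering. -/
noncomputable def lettericity {V : Type*} (G : SimpleGraph V) : ℕ :=
  sInf {k | HasLettering G k}

/-- The stacked path `Rₙ`: `Sum.inl (i, j)` is the clique vertex `c(i+1, j+1)` and
`Sum.inr (i, j)` is the independent-set vertex `s(i+1, j+1)`; the `c`-vertices form a
clique, the `s`-vertices form an independent set, and `s(u₁,v₁) ~ c(u₂,v₂)` iff
`u₁ > u₂` or (`u₁ = u₂` and `v₁ = v₂`). -/
def stackedPath (n : ℕ) : SimpleGraph ((Fin n × Fin 2) ⊕ (Fin n × Fin 2)) where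
  Adj a b :=
    match a, b with
    | Sum.inl c₁, Sum.inl c₂ => c₁ ≠ c₂
    | Sum.inl c, Sum.inr s => c.1 < s.1 ∨ (s.1 = c.1 ∧ s.2 = c.2)
    | Sum.inr s, Sum.inl c => c.1 < s.1 ∨ (s.1 = c.1 ∧ s.2 = c.2)
    | Sum.inr _, Sum.inr _ => False
  symm := by constructor; rintro (a | a) (b | b) h <;> first | exact h.symm | exact h
  loopless := by
    constructor
    rintro (a | a) h
    · exact h rfl
    · exact h

section Aux

variable {V : Type*} {G : SimpleGraph V} {k : ℕ} {D : Set (Fin k × Fin k)}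
  {L : V → Fin k} {ord : V → ℕ}

/-- From a lettering, every pair of distinct vertices gives an order fact together with
an adjacency-decoder equivalence. -/
lemma pairFact (hinj : Function.Injective ord)
    (h : ∀ u v : V, u ≠ v → ord u < ord v → (G.Adj u v ↔ (L u, L v) ∈ D))
    {u v : V} (huv : u ≠ v) :
    (ord u < ord v ∧ (G.Adj u v ↔ (L u, L v) ∈ D)) ∨
    (ord v < ord u ∧ (G.Adj u v ↔ (L v, L u) ∈ D)) := by
  rcases lt_or_gt_of_ne (fun he => huv (hinj he)) with hlt | hlt
  · exact Or.inl ⟨hlt, h u v huv hlt⟩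
  · have hv := h v u (Ne.symm huv) hlt
    rw [G.adj_comm] at hv
    exact Or.inr ⟨hlt, hv⟩

/-- Adjacency pattern (adj, non, adj, adj) among `u1,u2` (letter `x`) and `v1,v2`
(letter `a`) forces one of two order configurations. -/
lemma patternA (hinj : Function.Injective ord)
    (h : ∀ u v : V, u ≠ v → ord u < ord v → (G.Adj u v ↔ (L u, L v) ∈ D))
    {u1 u2 v1 v2 : V} {x a : Fin k}
    (hL1 : L u1 = x) (hL2 : L u2 = x) (hM1 : L v1 = a) (hM2 : L v2 = a)
    (d11 : u1 ≠ v1) (d12 : u1 ≠ v2) (d21 : u2 ≠ v1) (d22 : u2 ≠ v2)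
    (a11 : G.Adj u1 v1) (a12 : ¬ G.Adj u1 v2) (a21 : G.Adj u2 v1) (a22 : G.Adj u2 v2) :
    (ord u1 < ord v1 ∧ ord v2 < ord u1 ∧ ord u2 < ord v1 ∧ ord u2 < ord v2) ∨
    (ord v1 < ord u1 ∧ ord u1 < ord v2 ∧ ord v1 < ord u2 ∧ ord v2 < ord u2) := by
  have P11 := pairFact hinj h d11
  have P12 := pairFact hinj h d12
  have P21 := pairFact hinj h d21
  have P22 := pairFact hinj h d22
  rw [hL1, hM1] at P11
  rw [hL1, hM2] at P12
  rw [hL2, hM1] at P21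
  rw [hL2, hM2] at P22
  by_cases hxa : (x, a) ∈ D
  · by_cases hax : (a, x) ∈ D
    · rcases P12 with ⟨_, hiff⟩ | ⟨_, hiff⟩
      · exact absurd (hiff.mpr hxa) a12
      · exact absurd (hiff.mpr hax) a12
    · refine Or.inl ⟨?_, ?_, ?_, ?_⟩
      · rcases P11 with ⟨h1, _⟩ | ⟨_, hiff⟩
        · exact h1
        · exact absurd (hiff.mp a11) hax
      · rcases P12 with ⟨_, hiff⟩ | ⟨h1, _⟩
        · exact absurd (hiff.mpr hxa) a12
        · exact h1
      · rcases P21 with ⟨h1, _⟩ | ⟨_, hiff⟩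
        · exact h1
        · exact absurd (hiff.mp a21) hax
      · rcases P22 with ⟨h1, _⟩ | ⟨_, hiff⟩
        · exact h1
        · exact absurd (hiff.mp a22) hax
  · by_cases hax : (a, x) ∈ D
    · refine Or.inr ⟨?_, ?_, ?_, ?_⟩
      · rcases P11 with ⟨_, hiff⟩ | ⟨h1, _⟩
        · exact absurd (hiff.mp a11) hxa
        · exact h1
      · rcases P12 with ⟨h1, _⟩ | ⟨_, hiff⟩
        · exact h1
        · exact absurd (hiff.mpr hax) a12
      · rcases P21 with ⟨_, hiff⟩ | ⟨h1, _⟩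
        · exact absurd (hiff.mp a21) hxa
        · exact h1
      · rcases P22 with ⟨_, hiff⟩ | ⟨h1, _⟩
        · exact absurd (hiff.mp a22) hxa
        · exact h1
    · rcases P11 with ⟨_, hiff⟩ | ⟨_, hiff⟩
      · exact absurd (hiff.mp a11) hxa
      · exact absurd (hiff.mp a11) hax

/-- Adjacency pattern (non, non, adj, non) among `u1,u2` (letter `x`) and `v1,v2`
(letter `a`) forces one of two order configurations. -/
lemma patternB (hinj : Function.Injective ord)
    (h : ∀ u v : V, u ≠ v → ord u < ord v → (G.Adj u v ↔ (L u, L v) ∈ D))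
    {u1 u2 v1 v2 : V} {x a : Fin k}
    (hL1 : L u1 = x) (hL2 : L u2 = x) (hM1 : L v1 = a) (hM2 : L v2 = a)
    (d11 : u1 ≠ v1) (d12 : u1 ≠ v2) (d21 : u2 ≠ v1) (d22 : u2 ≠ v2)
    (a11 : ¬ G.Adj u1 v1) (a12 : ¬ G.Adj u1 v2) (a21 : G.Adj u2 v1) (a22 : ¬ G.Adj u2 v2) :
    (ord v1 < ord u1 ∧ ord v2 < ord u1 ∧ ord u2 < ord v1 ∧ ord v2 < ord u2) ∨
    (ord u1 < ord v1 ∧ ord u1 < ord v2 ∧ ord v1 < ord u2 ∧ ord u2 < ord v2) := by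
  have P11 := pairFact hinj h d11
  have P12 := pairFact hinj h d12
  have P21 := pairFact hinj h d21
  have P22 := pairFact hinj h d22
  rw [hL1, hM1] at P11
  rw [hL1, hM2] at P12
  rw [hL2, hM1] at P21
  rw [hL2, hM2] at P22
  by_cases hxa : (x, a) ∈ D
  · by_cases hax : (a, x) ∈ D
    · rcases P11 with ⟨_, hiff⟩ | ⟨_, hiff⟩
      · exact absurd (hiff.mpr hxa) a11
      · exact absurd (hiff.mpr hax) a11
    · refine Or.inl ⟨?_, ?_, ?_, ?_⟩
      · rcases P11 with ⟨_, hiff⟩ | ⟨h1, _⟩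
        · exact absurd (hiff.mpr hxa) a11
        · exact h1
      · rcases P12 with ⟨_, hiff⟩ | ⟨h1, _⟩
        · exact absurd (hiff.mpr hxa) a12
        · exact h1
      · rcases P21 with ⟨h1, _⟩ | ⟨_, hiff⟩
        · exact h1
        · exact absurd (hiff.mp a21) hax
      · rcases P22 with ⟨_, hiff⟩ | ⟨h1, _⟩
        · exact absurd (hiff.mpr hxa) a22
        · exact h1
  · by_cases hax : (a, x) ∈ D
    · refine Or.inr ⟨?_, ?_, ?_, ?_⟩
      · rcases P11 with ⟨h1, _⟩ | ⟨_, hiff⟩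
        · exact h1
        · exact absurd (hiff.mpr hax) a11
      · rcases P12 with ⟨h1, _⟩ | ⟨_, hiff⟩
        · exact h1
        · exact absurd (hiff.mpr hax) a12
      · rcases P21 with ⟨_, hiff⟩ | ⟨h1, _⟩
        · exact absurd (hiff.mp a21) hxa
        · exact h1
      · rcases P22 with ⟨h1, _⟩ | ⟨_, hiff⟩
        · exact h1
        · exact absurd (hiff.mpr hax) a22
    · rcases P21 with ⟨_, hiff⟩ | ⟨_, hiff⟩
      · exact absurd (hiff.mp a21) hxa
      · exact absurd (hiff.mp a21) hax

end Aux

/-- Two rows of the stacked path whose four vertices carry identical letters are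
incompatible with any lettering. -/
lemma stackedPath_rows_false {n k : ℕ} {D : Set (Fin k × Fin k)}
    {L : (Fin n × Fin 2) ⊕ (Fin n × Fin 2) → Fin k}
    {ord : (Fin n × Fin 2) ⊕ (Fin n × Fin 2) → ℕ}
    (hinj : Function.Injective ord)
    (h : ∀ u v, u ≠ v → ord u < ord v → ((stackedPath n).Adj u v ↔ (L u, L v) ∈ D))
    {i j : Fin n} (hij : i < j)
    (e1 : L (Sum.inl (i, 0)) = L (Sum.inl (j, 0)))
    (e2 : L (Sum.inl (i, 1)) = L (Sum.inl (j, 1)))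
    (e3 : L (Sum.inr (i, 0)) = L (Sum.inr (j, 0)))
    (e4 : L (Sum.inr (i, 1)) = L (Sum.inr (j, 1))) : False := by
  have adjSC : ∀ (s c : Fin n × Fin 2),
      (stackedPath n).Adj (Sum.inr s) (Sum.inl c) ↔
        (c.1 < s.1 ∨ (s.1 = c.1 ∧ s.2 = c.2)) := fun s c => Iff.rfl
  have aii : ∀ t : Fin 2, (stackedPath n).Adj (Sum.inr (i, t)) (Sum.inl (i, t)) :=
    fun t => (adjSC _ _).mpr (Or.inr ⟨rfl, rfl⟩)
  have ajj : ∀ t : Fin 2, (stackedPath n).Adj (Sum.inr (j, t)) (Sum.inl (j, t)) :=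
    fun t => (adjSC _ _).mpr (Or.inr ⟨rfl, rfl⟩)
  have aji : ∀ t t' : Fin 2, (stackedPath n).Adj (Sum.inr (j, t)) (Sum.inl (i, t')) :=
    fun t t' => (adjSC _ _).mpr (Or.inl hij)
  have nij : ∀ t t' : Fin 2, ¬ (stackedPath n).Adj (Sum.inr (i, t)) (Sum.inl (j, t')) := by
    intro t t'
    rw [adjSC]
    rintro (hlt | ⟨he, -⟩)
    · exact absurd hij (lt_asymm hlt)
    · exact absurd he hij.ne
  have nsame : ∀ (r : Fin n) (t t' : Fin 2), t ≠ t' →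
      ¬ (stackedPath n).Adj (Sum.inr (r, t)) (Sum.inl (r, t')) := by
    intro r t t' htt
    rw [adjSC]
    rintro (hlt | ⟨-, he⟩)
    · exact lt_irrefl _ hlt
    · exact htt he
  have H11 := patternA (u1 := Sum.inr (i, 0)) (u2 := Sum.inr (j, 0))
    (v1 := Sum.inl (i, 0)) (v2 := Sum.inl (j, 0)) hinj h rfl e3.symm rfl e1.symm
    (by simp) (by simp) (by simp) (by simp)
    (aii 0) (nij 0 0) (aji 0 0) (ajj 0)
  have H22 := patternA (u1 := Sum.inr (i, 1)) (u2 := Sum.inr (j, 1))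
    (v1 := Sum.inl (i, 1)) (v2 := Sum.inl (j, 1)) hinj h rfl e4.symm rfl e2.symm
    (by simp) (by simp) (by simp) (by simp)
    (aii 1) (nij 1 1) (aji 1 1) (ajj 1)
  have H12 := patternB (u1 := Sum.inr (i, 0)) (u2 := Sum.inr (j, 0))
    (v1 := Sum.inl (i, 1)) (v2 := Sum.inl (j, 1)) hinj h rfl e3.symm rfl e2.symm
    (by simp) (by simp) (by simp) (by simp)
    (nsame i 0 1 (by decide)) (nij 0 1) (aji 0 1) (nsame j 0 1 (by decide))
  have H21 := patternB (u1 := Sum.inr (i, 1)) (u2 := Sum.inr (j, 1))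
    (v1 := Sum.inl (i, 0)) (v2 := Sum.inl (j, 0)) hinj h rfl e4.symm rfl e1.symm
    (by simp) (by simp) (by simp) (by simp)
    (nsame i 1 0 (by decide)) (nij 1 0) (aji 1 0) (nsame j 1 0 (by decide))
  rcases H11 with ⟨p1, p2, p3, p4⟩ | ⟨p1, p2, p3, p4⟩ <;>
    rcases H22 with ⟨q1, q2, q3, q4⟩ | ⟨q1, q2, q3, q4⟩ <;>
      rcases H12 with ⟨r1, r2, r3, r4⟩ | ⟨r1, r2, r3, r4⟩ <;>
        rcases H21 with ⟨t1, t2, t3, t4⟩ | ⟨t1, t2, t3, t4⟩ <;> omega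

/-- The family of stacked paths has unbounded lettericity: for every `k` there
is a stacked path with no `k`-lettering. -/
theorem stackedPath_unbounded_lettericity (k : ℕ) :
    ∃ n : ℕ, 0 < n ∧ ¬ HasLettering (stackedPath n) k := by
  refine ⟨k ^ 4 + 1, Nat.succ_pos _, ?_⟩
  rintro ⟨D, L, ord, hinj, h⟩
  have hcard : Fintype.card (Fin k × Fin k × Fin k × Fin k) <
      Fintype.card (Fin (k ^ 4 + 1)) := by
    simp only [Fintype.card_prod, Fintype.card_fin]
    have : k * (k * (k * k)) = k ^ 4 := by ring
    omega
  obtain ⟨i, j, hij, hfeq⟩ := Fintype.exists_ne_map_eq_of_card_lt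
    (fun i : Fin (k ^ 4 + 1) =>
      (L (Sum.inl (i, 0)), L (Sum.inl (i, 1)), L (Sum.inr (i, 0)), L (Sum.inr (i, 1)))) hcard
  simp only [Prod.mk.injEq] at hfeq
  obtain ⟨e1, e2, e3, e4⟩ := hfeq
  rcases lt_or_gt_of_ne hij with hlt | hlt
  · exact stackedPath_rows_false hinj h hlt e1 e2 e3 e4
  · exact stackedPath_rows_false hinj h hlt e1.symm e2.symm e3.symm e4.symm
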